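/- Let n ≥ 2, 2 ≤ k ≤ n, 1 ≤ i ≤ n, and let r₁, …, r_n be real numbers. Then the derivative of q_{i,k} satisfies, as an identity of real polynomials in t, q_{i,k}'(t) = (n−k+1) q_{i,k−1}(t). -/

import Mathlib

open Polynomial

/-- `σ_m(r+tI) = Σ_{1≤i₁<…<i_m≤n} (t+r_{i₁})⋯(t+r_{i_m})` as a real polynomial in `t`. -/
noncomputable def sigmaTP (n : ℕ) (r : Fin n → ℝ) (m : ℕ) : Polynomial ℝ :=
  ∑ s ∈ Finset.powersetCard m (Finset.univ : Finset (Fin n)),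
    ∏ i ∈ s, (X + C (r i))

/-- `q_{i,k}(t) = Σ_{j=0}^{k−1} (−1)^j σ_{k−1−j}(r+tI) (t+r_i)^j`. -/
noncomputable def qPoly (n : ℕ) (r : Fin n → ℝ) (i : Fin n) (k : ℕ) : Polynomial ℝ :=
  ∑ j ∈ Finset.range k, ((-1 : ℝ) ^ j) • (sigmaTP n r (k - 1 - j) * (X + C (r i)) ^ j)

/-- `p_{k+1}(t) = (r₀₀ + t) σ_k(r+tI) − Σ_{i=1}^n q_{i,k}(t) x_i²`. -/
noncomputable def pPoly (n k : ℕ) (r₀₀ : ℝ) (r : Fin n → ℝ) (x : Fin n → ℝ) :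
    Polynomial ℝ :=
  (X + C r₀₀) * sigmaTP n r k - ∑ i : Fin n, ((x i) ^ 2) • qPoly n r i k

/-- `π_n(t) = (t+r₁)⋯(t+r_n)`. -/
noncomputable def piN (n : ℕ) (r : Fin n → ℝ) : Polynomial ℝ :=
  ∏ i : Fin n, (X + C (r i))

/-- `π_{i,n}(t) = ∏_{j≠i} (t+r_j)`. -/
noncomputable def piIN (n : ℕ) (r : Fin n → ℝ) (i : Fin n) : Polynomial ℝ :=
  ∏ j ∈ Finset.univ.erase i, (X + C (r j))

noncomputable def esymmP (n : ℕ) (r : Fin n → ℝ) (A : Finset (Fin n)) (m : ℕ) : Polynomial ℝ :=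
  ∑ s ∈ A.powersetCard m, ∏ j ∈ s, (X + C (r j))

lemma esymmP_insert (n : ℕ) (r : Fin n → ℝ) (A : Finset (Fin n)) {x : Fin n} (hx : x ∉ A)
    (m : ℕ) : esymmP n r (insert x A) (m + 1) =
      esymmP n r A (m + 1) + (X + C (r x)) * esymmP n r A m := by
  unfold esymmP
  rw [Finset.powersetCard_succ_insert hx, Finset.sum_union, Finset.sum_image, Finset.mul_sum]
  · congr 1
    refine Finset.sum_congr rfl fun s hs => ?_
    rw [Finset.mem_powersetCard] at hs
    rw [Finset.prod_insert (fun h => hx (hs.1 h))]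
  · intro s hs t ht h
    rw [Finset.mem_coe, Finset.mem_powersetCard] at hs ht
    have hxs : x ∉ s := fun h => hx (hs.1 h)
    have hxt : x ∉ t := fun h => hx (ht.1 h)
    have := congrArg (fun u => Finset.erase u x) h
    simpa [Finset.erase_insert hxs, Finset.erase_insert hxt] using this
  · rw [Finset.disjoint_right]
    rintro s hs hs'
    simp only [Finset.mem_image] at hs
    obtain ⟨t, ht, rfl⟩ := hs
    rw [Finset.mem_powersetCard] at hs'
    exact hx (hs'.1 (Finset.mem_insert_self x t))

lemma sigmaTP_eq (n : ℕ) (r : Fin n → ℝ) (m : ℕ) :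
    sigmaTP n r m = esymmP n r Finset.univ m := rfl

lemma sigmaTP_rec (n : ℕ) (r : Fin n → ℝ) (i : Fin n) (m : ℕ) :
    sigmaTP n r (m + 1) =
      esymmP n r (Finset.univ.erase i) (m + 1)
        + (X + C (r i)) * esymmP n r (Finset.univ.erase i) m := by
  rw [sigmaTP_eq]
  conv_lhs => rw [← Finset.insert_erase (Finset.mem_univ i)]
  rw [esymmP_insert n r _ (Finset.notMem_erase i _)]

lemma qPoly_succ (n : ℕ) (r : Fin n → ℝ) (i : Fin n) (k : ℕ) :
    qPoly n r i (k + 2) =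
      sigmaTP n r (k + 1) - (X + C (r i)) * qPoly n r i (k + 1) := by
  unfold qPoly
  rw [Finset.sum_range_succ' _ (k + 1)]
  have hA : ∀ j ∈ Finset.range (k + 1),
      ((-1 : ℝ) ^ (j + 1)) • (sigmaTP n r (k + 2 - 1 - (j + 1)) * (X + C (r i)) ^ (j + 1)) =
      -((X + C (r i)) * (((-1 : ℝ) ^ j) • (sigmaTP n r (k + 1 - 1 - j) * (X + C (r i)) ^ j))) := by
    intro j _
    have h1 : k + 2 - 1 - (j + 1) = k - j := by omega
    have h2 : k + 1 - 1 - j = k - j := by omega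
    rw [h1, h2]
    simp only [Polynomial.smul_eq_C_mul, map_pow, map_neg, map_one]
    ring
  rw [Finset.sum_congr rfl hA, Finset.sum_neg_distrib, ← Finset.mul_sum]
  show _ + ((-1 : ℝ) ^ 0) • (sigmaTP n r (k + 2 - 1 - 0) * (X + C (r i)) ^ 0) = _
  simp only [pow_zero, one_smul, mul_one, Nat.sub_zero]
  show _ + sigmaTP n r (k + 1) = _
  ring

lemma qPoly_eq (n : ℕ) (r : Fin n → ℝ) (i : Fin n) (k : ℕ) :
    qPoly n r i (k + 1) = esymmP n r (Finset.univ.erase i) k := by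
  induction k with
  | zero =>
      simp [qPoly, sigmaTP, esymmP]
  | succ k ih =>
      rw [qPoly_succ, ih, sigmaTP_rec n r i k]
      ring

lemma derivative_esymmP (n : ℕ) (r : Fin n → ℝ) (A : Finset (Fin n)) (m : ℕ) :
    Polynomial.derivative (esymmP n r A (m + 1)) = (A.card - m) • esymmP n r A m := by
  unfold esymmP
  rw [map_sum]
  have hstep : ∀ s ∈ A.powersetCard (m + 1),
      Polynomial.derivative (∏ j ∈ s, (X + C (r j))) =
        ∑ x ∈ s, ∏ j ∈ s.erase x, (X + C (r j)) := by
    intro s _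
    show Polynomial.derivative (Multiset.map _ s.val).prod = _
    rw [Polynomial.derivative_prod]
    simp only [derivative_add, derivative_X, derivative_C, add_zero, mul_one]
    rfl
  rw [Finset.sum_congr rfl hstep, Finset.sum_sigma']
  rw [Finset.sum_nbij' (i := fun p : (Σ _ : Finset (Fin n), Fin n) => (⟨p.1.erase p.2, p.2⟩ :
        Σ _ : Finset (Fin n), Fin n))
      (j := fun p : (Σ _ : Finset (Fin n), Fin n) => (⟨insert p.2 p.1, p.2⟩ :
        Σ _ : Finset (Fin n), Fin n))
      (t := (A.powersetCard m).sigma fun t => A \ t)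
      (g := fun p => ∏ j ∈ p.1, (X + C (r j)))]
  · rw [Finset.sum_sigma]
    have hconst : ∀ t ∈ A.powersetCard m,
        (∑ _x ∈ A \ t, ∏ j ∈ t, (X + C (r j))) = (A.card - m) • ∏ j ∈ t, (X + C (r j)) := by
      intro t ht
      rw [Finset.mem_powersetCard] at ht
      rw [Finset.sum_const, Finset.card_sdiff_of_subset ht.1, ht.2]
    rw [Finset.sum_congr rfl hconst, ← Finset.smul_sum]
  · rintro ⟨s, x⟩ hp
    simp only [Finset.mem_sigma, Finset.mem_powersetCard] at hp ⊢
    obtain ⟨⟨hsA, hcard⟩, hx⟩ := hp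
    refine ⟨⟨(Finset.erase_subset _ _).trans hsA, ?_⟩, ?_⟩
    · rw [Finset.card_erase_of_mem hx, hcard]; rfl
    · simp [Finset.mem_sdiff, hsA hx]
  · rintro ⟨t, x⟩ hp
    simp only [Finset.mem_sigma, Finset.mem_powersetCard, Finset.mem_sdiff] at hp ⊢
    obtain ⟨⟨htA, hcard⟩, hxA, hxt⟩ := hp
    refine ⟨⟨Finset.insert_subset hxA htA, ?_⟩, Finset.mem_insert_self _ _⟩
    rw [Finset.card_insert_of_notMem hxt, hcard]
  · rintro ⟨s, x⟩ hp
    simp only [Finset.mem_sigma, Finset.mem_powersetCard] at hp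
    simp [Finset.insert_erase hp.2]
  · rintro ⟨t, x⟩ hp
    simp only [Finset.mem_sigma, Finset.mem_powersetCard, Finset.mem_sdiff] at hp
    simp [Finset.erase_insert hp.2.2]
  · rintro ⟨s, x⟩ _
    rfl


/-- `q_{i,k}'(t) = (n−k+1) q_{i,k−1}(t)`. -/
theorem qPoly_derivative (n k : ℕ) (hn : 2 ≤ n) (hk2 : 2 ≤ k) (hkn : k ≤ n)
    (i : Fin n) (r : Fin n → ℝ) :
    Polynomial.derivative (qPoly n r i k) =
      ((n - k + 1 : ℕ) : ℝ) • qPoly n r i (k - 1) := by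
  obtain ⟨m, rfl⟩ : ∃ m, k = m + 2 := ⟨k - 2, by omega⟩
  have h1 : m + 2 - 1 = m + 1 := rfl
  rw [h1, qPoly_eq n r i (m + 1), qPoly_eq n r i m, derivative_esymmP]
  have hcard : (Finset.univ.erase i).card = n - 1 := by
    rw [Finset.card_erase_of_mem (Finset.mem_univ i), Finset.card_univ, Fintype.card_fin]
  rw [hcard]
  have h2 : n - 1 - m = n - (m + 2) + 1 := by omega
  rw [h2, Nat.cast_smul_eq_nsmul]
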